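/- For every z ∈ ℂ the jet map J_z : f ↦ ((ι f)⁽ⁿ⁾(z)/n!)_{n∈ℕ} maps H into ℓ²(ℕ, ℂᵖ) and is a bounded linear operator: there exists C ≥ 0 such that ∑_{n≥0} ‖(ι f)⁽ⁿ⁾(z)/n!‖² ≤ C²‖f‖²_H for every f ∈ H. -/

import Mathlib

open scoped InnerProductSpace ENNReal NNReal
open Filter Topology

set_option maxHeartbeats 1000000

/-- In the reproducing-kernel setup (`H` a complex Hilbert space realized by
`ι` as a space of entire `ℂᵖ`-valued functions with derivative-evaluation elements `D_{n,w}η`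
satisfying `⟨f, D_{n,w}η⟩_H = η* (ι f)⁽ⁿ⁾(w)/n!`; the paper's inner product, linear in the
first argument, is `⟪b, a⟫` in Mathlib's convention): for every `z ∈ ℂ` the jet map
`J_z : f ↦ ((ι f)⁽ⁿ⁾(z)/n!)ₙ` maps `H` into `ℓ²(ℕ, ℂᵖ)` and is bounded: there is `C ≥ 0` with
`∑ₙ ‖(ι f)⁽ⁿ⁾(z)/n!‖² ≤ C²‖f‖²` for all `f ∈ H`. -/
theorem jet_map_bounded
    {p : ℕ} (hp : 1 ≤ p)
    {H : Type*} [NormedAddCommGroup H] [InnerProductSpace ℂ H] [CompleteSpace H]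
    (ι : H →ₗ[ℂ] ℂ → EuclideanSpace ℂ (Fin p)) (hι : Function.Injective ι)
    (hent : ∀ f : H, Differentiable ℂ (ι f))
    (D : ℕ → ℂ → EuclideanSpace ℂ (Fin p) →ₗ[ℂ] H)
    (hD : ∀ (f : H) (n : ℕ) (w : ℂ) (η : EuclideanSpace ℂ (Fin p)),
      ⟪D n w η, f⟫_ℂ = ⟪η, (n.factorial : ℂ)⁻¹ • iteratedDeriv n (ι f) w⟫_ℂ)
    (z : ℂ) :
    ∃ C : ℝ, 0 ≤ C ∧ ∀ f : H,
      Summable (fun n : ℕ => ‖(n.factorial : ℂ)⁻¹ • iteratedDeriv n (ι f) z‖ ^ 2) ∧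
      ∑' n : ℕ, ‖(n.factorial : ℂ)⁻¹ • iteratedDeriv n (ι f) z‖ ^ 2 ≤ C ^ 2 * ‖f‖ ^ 2 := by
  classical
  -- coordinate maps, continuous via adjoint of D n z
  set T : ℕ → H →L[ℂ] EuclideanSpace ℂ (Fin p) := fun n =>
    ContinuousLinearMap.adjoint (LinearMap.toContinuousLinearMap (D n z)) with hTdef
  have hT : ∀ (n : ℕ) (f : H), T n f = (n.factorial : ℂ)⁻¹ • iteratedDeriv n (ι f) z := by
    intro n f
    apply ext_inner_right ℂ
    intro η
    rw [hTdef]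
    rw [ContinuousLinearMap.adjoint_inner_left]
    rw [LinearMap.coe_toContinuousLinearMap']
    rw [← inner_conj_symm, hD f n z η, inner_conj_symm]
  -- summability of norms
  have hsum : ∀ f : H, Summable
      fun n => ‖(n.factorial : ℂ)⁻¹ • iteratedDeriv n (ι f) z‖ := by
    intro f
    have hball := (hent f).hasFPowerSeriesOnBall z (R := 1) one_pos
    have hrad : (cauchyPowerSeries (ι f) z 1).radius = ⊤ := top_le_iff.mp hball.r_le
    have hcoeff : ∀ n : ℕ, (n.factorial : ℂ)⁻¹ • iteratedDeriv n (ι f) z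
        = cauchyPowerSeries (ι f) z 1 n (fun _ => (1 : ℂ)) := by
      intro n
      have h1 := hball.factorial_smul (1 : ℂ) n
      rw [← iteratedDeriv_eq_iteratedFDeriv] at h1
      rw [← h1, ← Nat.cast_smul_eq_nsmul ℂ, smul_smul,
        inv_mul_cancel₀ (by exact_mod_cast n.factorial_ne_zero), one_smul]
      norm_num
    have hx : (1 : ℂ) ∈ EMetric.ball (0 : ℂ) (cauchyPowerSeries (ι f) z 1).radius := by
      rw [hrad]; exact edist_lt_top 1 0
    have := (cauchyPowerSeries (ι f) z 1).summable_norm_apply hx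
    simpa only [← hcoeff] using this
  -- summability of squares
  have hsq : ∀ f : H, Summable
      fun n => ‖(n.factorial : ℂ)⁻¹ • iteratedDeriv n (ι f) z‖ ^ 2 := by
    intro f
    have h := hsum f
    have h0 := h.tendsto_atTop_zero
    have hev : ∀ᶠ n in atTop,
        ‖‖(n.factorial : ℂ)⁻¹ • iteratedDeriv n (ι f) z‖ ^ 2‖
          ≤ ‖(n.factorial : ℂ)⁻¹ • iteratedDeriv n (ι f) z‖ := by
      filter_upwards [h0.eventually (eventually_le_nhds one_pos)] with n hn
      rw [Real.norm_of_nonneg (by positivity)]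
      exact pow_le_of_le_one (norm_nonneg _) hn (by norm_num)
    exact Summable.of_norm_bounded_eventually_nat h hev
  -- the jet map into ℓ²
  have hmem : ∀ f : H, Memℓp (fun n => T n f) 2 := by
    intro f
    apply memℓp_gen
    have h2 : ((2 : ℝ≥0∞)).toReal = (2 : ℝ) := by norm_num
    rw [h2]
    have := hsq f
    simp only [hT]
    convert this using 2 with n
    rw [← Real.rpow_natCast]
    norm_num
  let Jlin : H →ₗ[ℂ] lp (fun _ : ℕ => EuclideanSpace ℂ (Fin p)) 2 :=
    { toFun := fun f => ⟨fun n => T n f, hmem f⟩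
      map_add' := fun f g => by apply lp.ext; funext n; simp; rfl
      map_smul' := fun c f => by apply lp.ext; funext n; simp }
  have hJcoe : ∀ (f : H) (n : ℕ), (Jlin f : ∀ _ : ℕ, EuclideanSpace ℂ (Fin p)) n = T n f :=
    fun f n => rfl
  have hcont : Continuous Jlin := by
    apply Jlin.continuous_of_seq_closed_graph
    intro u x y hux huy
    apply lp.ext; funext n
    have h1 : Tendsto (fun k => T n (u k)) atTop (𝓝 (T n x)) :=
      ((T n).continuous.tendsto x).comp hux
    have h2 : Tendsto (fun k => T n (u k)) atTop (𝓝 ((y : ∀ _ : ℕ, _) n)) := by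
      rw [tendsto_iff_norm_sub_tendsto_zero]
      have hle : ∀ k, ‖T n (u k) - (y : ∀ _ : ℕ, _) n‖ ≤ ‖Jlin (u k) - y‖ := by
        intro k
        have := lp.norm_apply_le_norm (by norm_num : (2 : ℝ≥0∞) ≠ 0) (Jlin (u k) - y) n
        simpa [hJcoe] using this
      refine squeeze_zero (fun k => norm_nonneg _) hle ?_
      have := tendsto_iff_norm_sub_tendsto_zero.mp huy
      exact this
    rw [hJcoe]
    exact tendsto_nhds_unique h2 h1
  let JL : H →L[ℂ] lp (fun _ : ℕ => EuclideanSpace ℂ (Fin p)) 2 := ⟨Jlin, hcont⟩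
  refine ⟨‖JL‖, norm_nonneg _, fun f => ?_⟩
  refine ⟨hsq f, ?_⟩
  have hnorm : ∑' n : ℕ, ‖(n.factorial : ℂ)⁻¹ • iteratedDeriv n (ι f) z‖ ^ 2
      = ‖JL f‖ ^ 2 := by
    have h2 : (0 : ℝ) < ((2 : ℝ≥0∞)).toReal := by norm_num
    have := lp.norm_rpow_eq_tsum h2 (JL f)
    have h2' : ((2 : ℝ≥0∞)).toReal = (2 : ℝ) := by norm_num
    rw [h2'] at this
    rw [← Real.rpow_natCast ‖JL f‖ 2]
    push_cast
    rw [this]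
    congr 1
    funext n
    have : (JL f : ∀ _ : ℕ, EuclideanSpace ℂ (Fin p)) n = T n f := rfl
    rw [this, hT, ← Real.rpow_natCast]
    norm_num
  rw [hnorm]
  calc ‖JL f‖ ^ 2 ≤ (‖JL‖ * ‖f‖) ^ 2 := by
        have := JL.le_opNorm f
        exact pow_le_pow_left₀ (norm_nonneg _) this 2
    _ = ‖JL‖ ^ 2 * ‖f‖ ^ 2 := by ring
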